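/- Every simple graph on a vertex type with exactly 4 elements that is an underlying push clique contains a spanning 4-cycle: its four vertices can be listed as a, b, c, d so that ab, bc, cd and da are all edges. -/

import Mathlib

/-- A directed graph `A` on `V` is an oriented graph: irreflexive and asymmetric. -/
def IsOriented {V : Type*} (A : V → V → Prop) : Prop :=
  (∀ v, ¬ A v v) ∧ ∀ u v, A u v → ¬ A v u

/-- `u` and `v` are adjacent in `A`. -/
def Adj {V : Type*} (A : V → V → Prop) (u v : V) : Prop :=
  A u v ∨ A v u

/-- The push of `A` by the vertex set `S`: arcs with exactly one endpoint in `S`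
are reversed. -/
def push {V : Type*} (S : Set V) (A : V → V → Prop) (u v : V) : Prop :=
  (Xor' (u ∈ S) (v ∈ S) ∧ A v u) ∨ (¬ Xor' (u ∈ S) (v ∈ S) ∧ A u v)

/-- `u` and `v` agree on `w`. -/
def AgreeOn {V : Type*} (A : V → V → Prop) (u v w : V) : Prop :=
  (A w u ∧ A w v) ∨ (A u w ∧ A v w)

/-- `u` and `v` disagree on `w`. -/
def DisagreeOn {V : Type*} (A : V → V → Prop) (u v w : V) : Prop :=
  (A u w ∧ A w v) ∨ (A w u ∧ A v w)

/-- `u` and `v` are joined by a directed 2-path in `A`. -/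
def TwoPath {V : Type*} (A : V → V → Prop) (u v : V) : Prop :=
  ∃ w, (A u w ∧ A w v) ∨ (A v w ∧ A w u)

/-- `A` is an oriented clique: any two distinct vertices are adjacent or joined
by a directed 2-path. -/
def IsOrientedClique {V : Type*} (A : V → V → Prop) : Prop :=
  ∀ u v, u ≠ v → Adj A u v ∨ TwoPath A u v

/-- `A` is a push clique: every push of `A` is an oriented clique. -/
def IsPushClique {V : Type*} (A : V → V → Prop) : Prop :=
  ∀ S : Set V, IsOrientedClique (push S A)

/-- `A` is an orientation of the simple graph `G`. -/
def IsOrientationOf {V : Type*} (A : V → V → Prop) (G : SimpleGraph V) : Prop :=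
  IsOriented A ∧ ∀ u v, Adj A u v ↔ G.Adj u v

/-- `G` is an underlying push clique. -/
def IsUnderlyingPushClique {V : Type*} (G : SimpleGraph V) : Prop :=
  ∃ A : V → V → Prop, IsOrientationOf A G ∧ IsPushClique A

/-- `G` is an underlying oriented clique. -/
def IsUnderlyingOrientedClique {V : Type*} (G : SimpleGraph V) : Prop :=
  ∃ A : V → V → Prop, IsOrientationOf A G ∧ IsOrientedClique A

lemma four_aux {V : Type*} [Fintype V] (hV : Fintype.card V = 4)
    {u v w x y : V} (h1 : u ≠ v) (h2 : u ≠ w) (h3 : v ≠ w)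
    (hx1 : x ≠ u) (hx2 : x ≠ v) (hx3 : x ≠ w)
    (hy1 : y ≠ u) (hy2 : y ≠ v) (hy3 : y ≠ w) : x = y := by
  classical
  have hs : ({u, v, w} : Finset V).card = 3 := by
    rw [Finset.card_insert_of_notMem (by simp [h1, h2]),
        Finset.card_insert_of_notMem (by simp [h3]), Finset.card_singleton]
  have hc : ({u, v, w} : Finset V)ᶜ.card = 1 := by
    rw [Finset.card_compl, hs, hV]
  exact Finset.card_le_one.mp hc.le x (by simp [hx1, hx2, hx3]) y (by simp [hy1, hy2, hy3])

lemma key_lemma {V : Type*} [Fintype V] (hV : Fintype.card V = 4)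
    (G : SimpleGraph V) (h : IsUnderlyingPushClique G)
    {u v w : V} (huv : u ≠ v) (huw : u ≠ w) (hvw : v ≠ w)
    (h1 : ¬ G.Adj u v) : G.Adj u w := by
  classical
  by_contra h2
  obtain ⟨A, ⟨hor, hadj⟩, hpc⟩ := h
  have arcG : ∀ (S : Set V) (a b : V), push S A a b → G.Adj a b := by
    intro S a b hp
    rcases hp with ⟨_, hba⟩ | ⟨_, hab⟩
    · exact (hadj a b).mp (Or.inr hba)
    · exact (hadj a b).mp (Or.inl hab)
  have adjpush : ∀ (S : Set V), ¬ Adj (push S A) u v := by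
    rintro S (hp | hp)
    · exact h1 (arcG S u v hp)
    · exact h1 ((arcG S v u hp).symm)
  -- 2-path in A itself (push ∅)
  have pe : ∀ a b : V, push ∅ A a b ↔ A a b := by
    intro a b; simp [push, Xor']
  obtain ⟨m, hm⟩ := (hpc ∅ u v huv).resolve_left (adjpush ∅)
  rw [pe, pe, pe, pe] at hm
  have hGum : G.Adj u m := by
    rcases hm with ⟨h', _⟩ | ⟨_, h'⟩
    · exact (hadj u m).mp (Or.inl h')
    · exact (hadj u m).mp (Or.inr h')
  have hGmv : G.Adj m v := by
    rcases hm with ⟨_, h'⟩ | ⟨h', _⟩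
    · exact (hadj m v).mp (Or.inl h')
    · exact (hadj m v).mp (Or.inr h')
  have hmu : m ≠ u := fun e => G.loopless.irrefl u (e ▸ hGum)
  have hmv : m ≠ v := fun e => G.loopless.irrefl v (e ▸ hGmv)
  have hmw : m ≠ w := fun e => h2 (e ▸ hGum)
  -- 2-path in push {u} A
  obtain ⟨m', hm'⟩ := (hpc {u} u v huv).resolve_left (adjpush {u})
  have hGum' : G.Adj u m' := by
    rcases hm' with ⟨h', _⟩ | ⟨_, h'⟩
    · exact arcG {u} u m' h'
    · exact (arcG {u} m' u h').symm
  have hGm'v : G.Adj m' v := by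
    rcases hm' with ⟨_, h'⟩ | ⟨h', _⟩
    · exact arcG {u} m' v h'
    · exact (arcG {u} v m' h').symm
  have hm'u : m' ≠ u := fun e => G.loopless.irrefl u (e ▸ hGum')
  have hm'v : m' ≠ v := fun e => G.loopless.irrefl v (e ▸ hGm'v)
  have hm'w : m' ≠ w := fun e => h2 (e ▸ hGum')
  have hmm : m' = m := four_aux hV huv huw hvw hm'u hm'v hm'w hmu hmv hmw
  subst hmm
  -- compute the push {u} arcs
  have hvu : v ≠ u := huv.symm
  simp only [push, Set.mem_singleton_iff, Xor'] at hm'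
  -- now derive contradiction with asymmetry
  have asym := hor.2
  rcases hm with ⟨h1', h2'⟩ | ⟨h1', h2'⟩ <;>
    rcases hm' with ⟨hA, hB⟩ | ⟨hA, hB⟩ <;>
    simp_all

theorem stmt_10 {V : Type*} [Fintype V] (hV : Fintype.card V = 4)
    (G : SimpleGraph V) (h : IsUnderlyingPushClique G) :
    ∃ a b c d : V, a ≠ b ∧ a ≠ c ∧ a ≠ d ∧ b ≠ c ∧ b ≠ d ∧ c ≠ d ∧
      ({a, b, c, d} : Set V) = Set.univ ∧
      G.Adj a b ∧ G.Adj b c ∧ G.Adj c d ∧ G.Adj d a := by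
  classical
  -- every vertex has at most one non-neighbor
  have L : ∀ u v w : V, u ≠ v → u ≠ w → v ≠ w → ¬ G.Adj u v → G.Adj u w :=
    fun u v w huv huw hvw h1 => key_lemma hV G h huv huw hvw h1
  obtain e := Fintype.equivFinOfCardEq hV
  set a := e.symm 0 with ha
  set b := e.symm 1 with hb
  set c := e.symm 2 with hc
  set d := e.symm 3 with hd
  have inj := e.symm.injective
  have hab : a ≠ b := fun h' => by simpa using inj h'
  have hac : a ≠ c := fun h' => by simpa using inj h'
  have had : a ≠ d := fun h' => by simpa using inj h'
  have hbc : b ≠ c := fun h' => by simpa using inj h'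
  have hbd : b ≠ d := fun h' => by simpa using inj h'
  have hcd : c ≠ d := fun h' => by simpa using inj h'
  have cover : ∀ x : V, x = a ∨ x = b ∨ x = c ∨ x = d := by
    intro x
    have h4 : ∀ i : Fin 4, i = 0 ∨ i = 1 ∨ i = 2 ∨ i = 3 := by decide
    have hx := e.symm_apply_apply x
    rcases h4 (e x) with h' | h' | h' | h' <;>
      rw [h'] at hx <;> [exact Or.inl hx.symm; exact Or.inr (Or.inl hx.symm);
        exact Or.inr (Or.inr (Or.inl hx.symm)); exact Or.inr (Or.inr (Or.inr hx.symm))]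
  have univ4 : ∀ x y z t : V, ({x, y, z, t} : Set V) ⊇ {a, b, c, d} →
      ({x, y, z, t} : Set V) = Set.univ := by
    intro x y z t hsub
    apply Set.eq_univ_of_forall
    intro p
    rcases cover p with h' | h' | h' | h' <;> subst h' <;> apply hsub <;> simp
  by_cases e1 : G.Adj a b
  · by_cases e2 : G.Adj a c
    · by_cases e3 : G.Adj a d
      · by_cases e4 : G.Adj b c
        · by_cases e5 : G.Adj b d
          · by_cases e6 : G.Adj c d
            · exact ⟨a, b, c, d, hab, hac, had, hbc, hbd, hcd,
                univ4 a b c d (by intro p hp; simpa using hp),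
                e1, e4, e6, e3.symm⟩
            · -- ¬cd : cycle a c b d
              exact ⟨a, c, b, d, hac, hab, had, hbc.symm, hcd, hbd,
                univ4 a c b d (by intro p hp; simp at hp ⊢; tauto),
                e2, e4.symm, e5, e3.symm⟩
          · -- ¬bd : cycle a b c d, need cd
            have e6 : G.Adj d c := L d b c hbd.symm hcd.symm hbc (fun h' => e5 h'.symm)
            exact ⟨a, b, c, d, hab, hac, had, hbc, hbd, hcd,
              univ4 a b c d (by intro p hp; simpa using hp),
              e1, e4, e6.symm, e3.symm⟩
        · -- ¬bc : bd and cd edges; cycle a b d c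
          have e5 : G.Adj b d := L b c d hbc hbd hcd e4
          have e6 : G.Adj c d := L c b d hbc.symm hcd hbd (fun h' => e4 h'.symm)
          exact ⟨a, b, d, c, hab, had, hac, hbd, hbc, hcd.symm,
            univ4 a b d c (by intro p hp; simp at hp ⊢; tauto),
            e1, e5, e6.symm, e2.symm⟩
      · -- ¬ad : ab, ac edges; db, dc edges; cycle a b d c
        have e5 : G.Adj d b := L d a b had.symm hbd.symm hab (fun h' => e3 h'.symm)
        have e6 : G.Adj d c := L d a c had.symm hcd.symm hac (fun h' => e3 h'.symm)
        exact ⟨a, b, d, c, hab, had, hac, hbd, hbc, hcd.symm,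
          univ4 a b d c (by intro p hp; simp at hp ⊢; tauto),
          e1, e5.symm, e6, e2.symm⟩
    · -- ¬ac : ab, ad ; cb, cd ; cycle a b c d
      have e3 : G.Adj a d := L a c d hac had hcd e2
      have e4 : G.Adj c b := L c a b hac.symm hbc.symm hab (fun h' => e2 h'.symm)
      have e6 : G.Adj c d := L c a d hac.symm hcd had (fun h' => e2 h'.symm)
      exact ⟨a, b, c, d, hab, hac, had, hbc, hbd, hcd,
        univ4 a b c d (by intro p hp; simpa using hp),
        e1, e4.symm, e6, e3.symm⟩
  · -- ¬ab : ac, ad ; bc, bd ; cycle a c b d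
    have e2 : G.Adj a c := L a b c hab hac hbc e1
    have e3 : G.Adj a d := L a b d hab had hbd e1
    have e4 : G.Adj b c := L b a c hab.symm hbc hac (fun h' => e1 h'.symm)
    have e5 : G.Adj b d := L b a d hab.symm hbd had (fun h' => e1 h'.symm)
    exact ⟨a, c, b, d, hac, hab, had, hbc.symm, hcd, hbd,
      univ4 a c b d (by intro p hp; simp at hp ⊢; tauto),
      e2, e4.symm, e5, e3.symm⟩
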